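/- Let k be a p-adic field and let E/k be a finite field extension such that every field extension of k of degree p admits a k-embedding into E. Let D be a central division algebra of degree p over E. Then for every field extension N/k of degree p, the algebra D ⊗_E (N ⊗_k E) is not split; that is, there is at least one field factor of the étale E-algebra N ⊗_k E over which the base change of D remains a division algebra. (This expresses that the corresponding torsor under R_{E/k}(PGL_p) has no closed point of degree p.) -/

import Mathlib

open scoped TensorProduct
open Module

set_option synthInstance.maxHeartbeats 400000
set_option maxHeartbeats 800000

/-- The central simple algebra `D` of degree `p` over `E` is split over `N ⊗_k E`, i.e. its
base change to every field factor `F` of the étale `E`-algebra `N ⊗_k E` is a matrix algebra;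
field factors are encoded as fields `F` receiving `N` and `E` compatibly over `k` with the
induced map `N ⊗[k] E → F` surjective. -/
def CSASplitsOver (k E : Type) [Field k] [Field E] [Algebra k E]
    (D : Type) [Ring D] [Algebra E D] (p : ℕ)
    (N : Type) [Field N] [Algebra k N] : Prop :=
  ∀ (F : Type) [Field F] [Algebra k F] [Algebra N F] [Algebra E F]
    [IsScalarTower k N F] [IsScalarTower k E F],
    Function.Surjective (Algebra.TensorProduct.productMap
      (IsScalarTower.toAlgHom k N F) (IsScalarTower.toAlgHom k E F)) →
    Nonempty ((F ⊗[E] D) ≃ₐ[F] Matrix (Fin p) (Fin p) F)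

/-- Let `k` be a `p`-adic field and `E/k` a finite extension into which every
degree-`p` extension of `k` embeds over `k`. Let `D` be a central division algebra of degree
`p` over `E` (so `dim_E D = p²`). Then for every field extension `N/k` of degree `p`, the
algebra `D ⊗_E (N ⊗_k E)` is not split, i.e. it is not the case that the base change of `D`
to every field factor of `N ⊗_k E` is a matrix algebra. (So the corresponding
`R_{E/k}(PGL_p)`-torsor has no closed point of degree `p`.) -/
theorem statement9 (p : ℕ) [Fact p.Prime] (k : Type) [Field k]
    [Algebra ℚ_[p] k] [FiniteDimensional ℚ_[p] k]
    (E : Type) [Field E] [Algebra k E] [FiniteDimensional k E]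
    (hE : ∀ (F : Type) [Field F] [Algebra k F], FiniteDimensional k F →
      finrank k F = p → Nonempty (F →ₐ[k] E))
    (D : Type) [DivisionRing D] [Algebra E D] [Algebra.IsCentral E D]
    (hD : finrank E D = p ^ 2)
    (N : Type) [Field N] [Algebra k N] [FiniteDimensional k N]
    (hN : finrank k N = p) :
    ¬ CSASplitsOver k E D p N := by
  intro h
  obtain ⟨σ⟩ := hE N inferInstance hN
  letI : Algebra N E := σ.toRingHom.toAlgebra
  haveI : IsScalarTower k N E :=
    IsScalarTower.of_algebraMap_eq (fun x => (σ.commutes x).symm)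
  have hsurj : Function.Surjective (Algebra.TensorProduct.productMap
      (IsScalarTower.toAlgHom k N E) (IsScalarTower.toAlgHom k E E)) := by
    intro x
    refine ⟨1 ⊗ₜ x, ?_⟩
    simp
  obtain ⟨e⟩ := h E hsurj
  -- ring isomorphism from matrices to D
  have hp2 : 2 ≤ p := (Fact.out : p.Prime).two_le
  let i0 : Fin p := ⟨0, by omega⟩
  let i1 : Fin p := ⟨1, by omega⟩
  let g : Matrix (Fin p) (Fin p) E →+* D :=
    (Algebra.TensorProduct.lid E D).toRingEquiv.toRingHom.comp
      e.symm.toRingEquiv.toRingHom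
  have hginj : Function.Injective g :=
    ((Algebra.TensorProduct.lid E D).toRingEquiv.injective).comp
      e.symm.toRingEquiv.injective
  let A : Matrix (Fin p) (Fin p) E := Matrix.single i0 i1 1
  have hA2 : A * A = 0 := by
    exact Matrix.single_mul_single_of_ne i0 i1 i0 (c := (1 : E))
      (show i1 ≠ i0 by simp [i0, i1, Fin.ext_iff]) 1
  have hAne : A ≠ 0 := by
    intro hzero
    have := congrFun (congrFun hzero i0) i1
    simp [A] at this
  have hgA : g A * g A = 0 := by
    rw [← map_mul, hA2, map_zero]
  have : g A = 0 := by
    rcases mul_eq_zero.mp hgA with h' | h' <;> exact h'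
  exact hAne (hginj (by simpa using this))
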